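/- For every measurable g : S → (0,∞), one has λ · E[ g(ξ_N) / ( g(ξ_N) + Σ_{0 ≤ j < N} g(ξ_j) ) ] = 1 − e^{−λ}. -/

import Mathlib

open MeasureTheory ProbabilityTheory

universe u v

/-- The codomain family for the joint family `(N, ξ₀, ξ₁, …)`: the index `none` corresponds
to the `ℕ`-valued variable `N` and `some i` to the `S`-valued mark `ξ i`. -/
def stmt16Fam (S : Type u) : Option ℕ → Type u
  | none => ULift ℕ
  | some _ => S

/-- The measurable structure on each member of the family. -/
def stmt16FamMS (S : Type u) [MeasurableSpace S] :
    ∀ o : Option ℕ, MeasurableSpace (stmt16Fam S o)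
  | none => inferInstanceAs (MeasurableSpace (ULift ℕ))
  | some _ => inferInstanceAs (MeasurableSpace S)

/-- The joint family `(N, ξ₀, ξ₁, …)` as a dependent family of random variables. -/
def stmt16FamFun {Ω : Type v} {S : Type u} (N : Ω → ℕ) (ξ : ℕ → Ω → S) :
    ∀ o : Option ℕ, Ω → stmt16Fam S o
  | none => fun ω => ULift.up (N ω)
  | some i => ξ i

lemma auxMeasComp {Ω : Type v} {α : Type*} [MeasurableSpace Ω] [MeasurableSpace α]
    {N : Ω → ℕ} (hN : Measurable N) {F : ℕ → Ω → α} (hF : ∀ k, Measurable (F k)) :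
    Measurable fun ω => F (N ω) ω := by
  intro B hB
  have h : (fun ω => F (N ω) ω) ⁻¹' B = ⋃ k, ({ω | N ω = k} ∩ F k ⁻¹' B) := by
    ext ω
    simp only [Set.mem_preimage, Set.mem_iUnion, Set.mem_inter_iff, Set.mem_setOf_eq]
    exact ⟨fun h => ⟨N ω, rfl, h⟩, fun ⟨k, hk, h⟩ => hk ▸ h⟩
  rw [h]
  exact MeasurableSet.iUnion fun k => (hN (measurableSet_singleton k)).inter (hF k hB)

lemma auxPiInt {S : Type u} [MeasurableSpace S] (π : Measure S) [IsProbabilityMeasure π]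
    (g : S → ℝ) (hg : Measurable g) (hgpos : ∀ z, 0 < g z) (n : ℕ) (j : Fin (n + 1)) :
    ∫ x : Fin (n + 1) → S, g (x j) / ∑ i, g (x i) ∂(Measure.pi fun _ => π)
      = ((n : ℝ) + 1)⁻¹ := by
  set μ := Measure.pi (fun _ : Fin (n + 1) => π) with hμ
  have hTpos : ∀ x : Fin (n + 1) → S, 0 < ∑ i, g (x i) := fun x =>
    Finset.sum_pos (fun i _ => hgpos _) ⟨j, Finset.mem_univ j⟩
  have hmeas : ∀ j' : Fin (n + 1),
      Measurable (fun x : Fin (n + 1) → S => g (x j') / ∑ i, g (x i)) := fun j' =>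
    (hg.comp (measurable_pi_apply j')).div
      (Finset.measurable_sum _ fun i _ => hg.comp (measurable_pi_apply i))
  have hint : ∀ j' : Fin (n + 1),
      Integrable (fun x : Fin (n + 1) → S => g (x j') / ∑ i, g (x i)) μ := by
    intro j'
    refine (integrable_const (1 : ℝ)).mono' (hmeas j').aestronglyMeasurable
      (ae_of_all _ fun x => ?_)
    rw [Real.norm_eq_abs, abs_of_nonneg (div_nonneg (hgpos _).le (hTpos x).le)]
    exact div_le_one_of_le₀
      (Finset.single_le_sum (fun i _ => (hgpos (x i)).le) (Finset.mem_univ j')) (hTpos x).le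
  have key : ∀ j' : Fin (n + 1),
      (∫ x, g (x j') / ∑ i, g (x i) ∂μ) = ∫ x, g (x j) / ∑ i, g (x i) ∂μ := by
    intro j'
    have hmp := measurePreserving_piCongrLeft (fun _ : Fin (n + 1) => π) (Equiv.swap j j')
    have := hmp.integral_comp
      (MeasurableEquiv.piCongrLeft (fun _ => S) (Equiv.swap j j')).measurableEmbedding
      (fun x => g (x j') / ∑ i, g (x i))
    rw [hμ, ← this]
    refine integral_congr_ae (ae_of_all _ fun x => ?_)
    have happ : ∀ i, (MeasurableEquiv.piCongrLeft (fun _ => S) (Equiv.swap j j')) x i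
        = x (Equiv.swap j j' i) := by
      intro i
      have h := MeasurableEquiv.piCongrLeft_apply_apply (Equiv.swap j j')
        (β := fun _ => S) x ((Equiv.swap j j').symm i)
      rwa [Equiv.apply_symm_apply, Equiv.symm_swap] at h
    simp only [happ]
    rw [Equiv.swap_apply_right, Equiv.sum_comp (Equiv.swap j j') (fun i => g (x i))]
  have hsum : ∑ j' : Fin (n + 1), ∫ x, g (x j') / ∑ i, g (x i) ∂μ = 1 := by
    rw [← integral_finset_sum Finset.univ (fun j' _ => hint j')]
    have h1 : ∀ x : Fin (n + 1) → S,
        ∑ j' : Fin (n + 1), g (x j') / ∑ i, g (x i) = 1 := fun x => by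
      rw [← Finset.sum_div, div_self (hTpos x).ne']
    simp_rw [h1]
    simp [μ]
  rw [Finset.sum_congr rfl (fun j' _ => key j'), Finset.sum_const, Finset.card_univ,
    Fintype.card_fin, nsmul_eq_mul] at hsum
  have hne : ((n : ℝ) + 1) ≠ 0 := by positivity
  field_simp at hsum ⊢
  push_cast at hsum
  linarith

lemma auxMapPi {Ω : Type v} [MeasurableSpace Ω] (P : Measure Ω) [IsProbabilityMeasure P]
    {S : Type u} [MeasurableSpace S]
    (N : Ω → ℕ) (ξ : ℕ → Ω → S) (hξ : ∀ i, Measurable (ξ i))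
    (π : Measure S) [IsProbabilityMeasure π]
    (hdist : ∀ i, Measure.map (ξ i) P = π)
    (hindep : iIndepFun (m := stmt16FamMS S) (stmt16FamFun N ξ) P) (n : ℕ) :
    Measure.map (fun ω (i : Fin (n + 1)) => ξ i ω) P
      = Measure.pi (fun _ : Fin (n + 1) => π) := by
  have htuple : Measurable (fun ω (i : Fin (n + 1)) => ξ i ω) :=
    measurable_pi_lambda _ fun i => hξ i
  refine (Measure.pi_eq (μ := fun _ => π) fun s hs => ?_).symm
  rw [Measure.map_apply htuple (MeasurableSet.univ_pi fun i => hs i)]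
  classical
  set s' : Option ℕ → Set Ω := fun o =>
    Option.rec Set.univ
      (fun i => ξ i ⁻¹' (if h : i < n + 1 then s ⟨i, h⟩ else Set.univ)) o with hs'
  set T : Finset (Option ℕ) := (Finset.range (n + 1)).image some with hT
  have hmem : ∀ o ∈ T, MeasurableSet[(stmt16FamMS S o).comap (stmt16FamFun N ξ o)] (s' o) := by
    intro o ho
    rw [hT, Finset.mem_image] at ho
    obtain ⟨i, hi, rfl⟩ := ho
    rw [Finset.mem_range] at hi
    refine ⟨if h : i < n + 1 then s ⟨i, h⟩ else Set.univ, ?_, rfl⟩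
    by_cases h : i < n + 1
    · show @MeasurableSet S _ (if h : i < n + 1 then s ⟨i, h⟩ else Set.univ)
      rw [dif_pos h]; exact hs ⟨i, h⟩
    · simp [h]
  have hprod := hindep.meas_biInter (S := T) (s := s') hmem
  have hiInter : (⋂ o ∈ T, s' o)
      = (fun ω (i : Fin (n + 1)) => ξ i ω) ⁻¹' Set.pi Set.univ s := by
    ext ω
    simp only [Set.mem_iInter, Set.mem_preimage, Set.mem_pi, Set.mem_univ, forall_true_left,
      hT, Finset.mem_image, Finset.mem_range]
    constructor
    · intro h i
      have := h (some i.1) ⟨i.1, i.isLt, rfl⟩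
      simpa [hs', i.isLt, Fin.is_le] using this
    · rintro h o ⟨i, hi, rfl⟩
      simpa [hs', hi, Nat.lt_succ_iff.mp hi] using h ⟨i, hi⟩
  rw [hiInter] at hprod
  rw [hprod, hT, Finset.prod_image (fun a _ b _ h => Option.some_injective ℕ h)]
  rw [← Fin.prod_univ_eq_prod_range (fun i => P (s' (some i))) (n + 1)]
  refine Finset.prod_congr rfl fun i _ => ?_
  have h2 : s' (some i.1) = ξ i.1 ⁻¹' (s i) := by simp [hs', i.isLt, Fin.eta, Fin.is_le]
  rw [h2, ← hdist i.1, Measure.map_apply (hξ i.1) (hs i)]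

/-- For a Poisson(λ) number `N` of i.i.d. marks `ξ i` (jointly independent with `N`) and a
positive measurable `g`, `λ E[ g(ξ N) / (g(ξ N) + Σ_{j<N} g(ξ j)) ] = 1 - e^{-λ}`. -/
theorem stmt16 {Ω : Type v} [MeasurableSpace Ω] (P : Measure Ω) [IsProbabilityMeasure P]
    {S : Type u} [MeasurableSpace S]
    (l : ℝ) (hl : 0 < l)
    (N : Ω → ℕ) (hNmeas : Measurable N)
    (hN : ∀ k : ℕ, P {ω | N ω = k}
      = ENNReal.ofReal (Real.exp (-l) * l ^ k / Nat.factorial k))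
    (ξ : ℕ → Ω → S) (hξ : ∀ i, Measurable (ξ i))
    (π : Measure S) [IsProbabilityMeasure π]
    (hdist : ∀ i, Measure.map (ξ i) P = π)
    (hindep : iIndepFun (m := stmt16FamMS S) (stmt16FamFun N ξ) P)
    (g : S → ℝ) (hg : Measurable g) (hgpos : ∀ z, 0 < g z) :
    l * ∫ ω, g (ξ (N ω) ω)
          / (g (ξ (N ω) ω) + ∑ j ∈ Finset.range (N ω), g (ξ j ω)) ∂P
      = 1 - Real.exp (-l) := by
  classical
  letI : ∀ o : Option ℕ, MeasurableSpace (stmt16Fam S o) := stmt16FamMS S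
  set f : Ω → ℝ := fun ω =>
    g (ξ (N ω) ω) / (g (ξ (N ω) ω) + ∑ j ∈ Finset.range (N ω), g (ξ j ω)) with hf
  -- measurability of `f`
  have hFmeas : ∀ k : ℕ, Measurable (fun ω =>
      g (ξ k ω) / (g (ξ k ω) + ∑ j ∈ Finset.range k, g (ξ j ω))) := fun k =>
    (hg.comp (hξ k)).div ((hg.comp (hξ k)).add
      (Finset.measurable_sum _ fun j _ => hg.comp (hξ j)))
  have hfmeas : Measurable f := auxMeasComp hNmeas hFmeas
  have hden : ∀ ω, 0 < g (ξ (N ω) ω) + ∑ j ∈ Finset.range (N ω), g (ξ j ω) := fun ω =>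
    add_pos_of_pos_of_nonneg (hgpos _) (Finset.sum_nonneg fun j _ => (hgpos _).le)
  have hfint : Integrable f P := by
    refine (integrable_const (1 : ℝ)).mono' hfmeas.aestronglyMeasurable
      (ae_of_all _ fun ω => ?_)
    rw [Real.norm_eq_abs, abs_of_nonneg (div_nonneg (hgpos _).le (hden ω).le)]
    exact div_le_one_of_le₀
      (le_add_of_nonneg_right (Finset.sum_nonneg fun j _ => (hgpos _).le)) (hden ω).le
  -- the partition
  set A : ℕ → Set Ω := fun k => {ω | N ω = k} with hA
  have hAmeas : ∀ k, MeasurableSet (A k) := fun k => hNmeas (measurableSet_singleton k)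
  have hAdisj : Pairwise (Function.onFun Disjoint A) := by
    intro i j hij
    rw [Function.onFun, Set.disjoint_left]
    rintro ω (hi : N ω = i) (hj : N ω = j)
    exact hij (hi ▸ hj)
  have hAunion : (⋃ k, A k) = Set.univ := by
    ext ω; simp [hA]
  -- per-k computation
  have hperk : ∀ k : ℕ, ∫ ω in A k, f ω ∂P
      = (Real.exp (-l) * l ^ k / Nat.factorial k) * ((k : ℝ) + 1)⁻¹ := by
    intro k
    -- step 1: replace f by a function of (ξ_0, …, ξ_k) on A k
    have hstep1 : ∫ ω in A k, f ω ∂P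
        = ∫ ω in A k, g (ξ k ω) / ∑ i : Fin (k + 1), g (ξ i ω) ∂P := by
      refine setIntegral_congr_fun (hAmeas k) fun ω hω => ?_
      have hωk : N ω = k := hω
      rw [hf]
      simp only [hωk]
      congr 1
      rw [Fin.sum_univ_eq_sum_range (fun j => g (ξ j ω)) (k + 1),
        Finset.sum_range_succ, add_comm]
    rw [hstep1]
    -- step 2: independence factorization
    set T : Finset (Option ℕ) := (Finset.range (k + 1)).image some with hT
    have hdisjT : Disjoint ({none} : Finset (Option ℕ)) T := by
      simp [hT, Finset.disjoint_left]
    have hfammeas : ∀ o, Measurable (stmt16FamFun N ξ o) := by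
      rintro (_ | i)
      · exact measurable_up.comp hNmeas
      · exact hξ i
    have hIFbase := hindep.indepFun_finset {none} T hdisjT hfammeas
    set φ : (∀ o : ({none} : Finset (Option ℕ)), stmt16Fam S o.1) → ℝ := fun v =>
      if (show ULift ℕ from v ⟨none, Finset.mem_singleton_self none⟩).down = k then 1 else 0
      with hφdef
    set ev : (∀ o : T, stmt16Fam S o.1) → Fin (k + 1) → S := fun v i =>
      (show S from v ⟨some i.1,
        Finset.mem_image_of_mem some (Finset.mem_range.mpr i.isLt)⟩) with hevdef
    set ψ : (∀ o : T, stmt16Fam S o.1) → ℝ := fun v =>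
      g (ev v (Fin.last k)) / ∑ i : Fin (k + 1), g (ev v i) with hψdef
    have hφ : Measurable φ := by
      have h1 : Measurable fun v : (∀ o : ({none} : Finset (Option ℕ)), stmt16Fam S o.1) =>
          (show ULift ℕ from v ⟨none, Finset.mem_singleton_self none⟩) :=
        measurable_pi_apply _
      exact Measurable.ite
        ((measurable_down.comp h1) (measurableSet_singleton k))
        measurable_const measurable_const
    have hev : ∀ i : Fin (k + 1), Measurable fun v => ev v i := fun i =>
      measurable_pi_apply _
    have hψ : Measurable ψ :=
      (hg.comp (hev (Fin.last k))).div
        (Finset.measurable_sum _ fun i _ => hg.comp (hev i))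
    have hIF := hIFbase.comp hφ hψ
    have hXeq : (φ ∘ fun a (i : ({none} : Finset (Option ℕ))) => stmt16FamFun N ξ i a)
        = fun ω => if N ω = k then (1 : ℝ) else 0 := rfl
    have hYeq : (ψ ∘ fun a (i : T) => stmt16FamFun N ξ i a)
        = fun ω => g (ξ k ω) / ∑ i : Fin (k + 1), g (ξ i ω) := rfl
    rw [hXeq, hYeq] at hIF
    -- step 3: rewrite the set integral as an integral of a product
    have hindicator : ∫ ω in A k, g (ξ k ω) / ∑ i : Fin (k + 1), g (ξ i ω) ∂P
        = ∫ ω, ((fun ω => if N ω = k then (1 : ℝ) else 0) *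
            (fun ω => g (ξ k ω) / ∑ i : Fin (k + 1), g (ξ i ω))) ω ∂P := by
      rw [← integral_indicator (hAmeas k)]
      refine integral_congr_ae (ae_of_all _ fun ω => ?_)
      by_cases hω : N ω = k
      · simp [Set.indicator_apply, hA, hω]
      · simp [Set.indicator_apply, hA, hω]
    rw [hindicator]
    have hXmeas : Measurable fun ω => if N ω = k then (1 : ℝ) else 0 :=
      Measurable.ite (hNmeas (measurableSet_singleton k)) measurable_const measurable_const
    have hYmeas : Measurable fun ω => g (ξ k ω) / ∑ i : Fin (k + 1), g (ξ i ω) :=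
      (hg.comp (hξ k)).div (Finset.measurable_sum _ fun i _ => hg.comp (hξ i))
    rw [IndepFun.integral_mul_eq_mul_integral hIF
      hXmeas.aestronglyMeasurable hYmeas.aestronglyMeasurable]
    -- step 4: the two factors
    have hX : ∫ ω, (if N ω = k then (1 : ℝ) else 0) ∂P = (P (A k)).toReal := by
      have : (fun ω => if N ω = k then (1 : ℝ) else 0)
          = Set.indicator (A k) (fun _ => (1 : ℝ)) := by
        ext ω; by_cases hω : N ω = k <;> simp [Set.indicator_apply, hA, hω]
      rw [this, integral_indicator_const (1 : ℝ) (hAmeas k), smul_eq_mul, mul_one, measureReal_def]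
    have hY : ∫ ω, g (ξ k ω) / ∑ i : Fin (k + 1), g (ξ i ω) ∂P = ((k : ℝ) + 1)⁻¹ := by
      have hmap := auxMapPi P N ξ hξ π hdist hindep k
      have htuple : Measurable (fun ω (i : Fin (k + 1)) => ξ i ω) :=
        measurable_pi_lambda _ fun i => hξ i
      have hFk : Measurable fun x : Fin (k + 1) → S =>
          g (x (Fin.last k)) / ∑ i, g (x i) :=
        (hg.comp (measurable_pi_apply _)).div
          (Finset.measurable_sum _ fun i _ => hg.comp (measurable_pi_apply i))
      have := integral_map (μ := P) htuple.aemeasurable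
        (f := fun x : Fin (k + 1) → S => g (x (Fin.last k)) / ∑ i, g (x i))
        (hmap ▸ hFk.aestronglyMeasurable)
      rw [hmap, auxPiInt π g hg hgpos k (Fin.last k)] at this
      exact this.symm
    rw [hX, hY, hN k, ENNReal.toReal_ofReal (by positivity)]
  -- assemble
  have hsplit : ∫ ω, f ω ∂P = ∑' k, ∫ ω in A k, f ω ∂P := by
    have h := integral_iUnion hAmeas hAdisj hfint.integrableOn
    rwa [hAunion, Measure.restrict_univ] at h
  rw [hsplit, tsum_congr hperk]
  -- the series
  have hterm : ∀ k : ℕ, l * ((Real.exp (-l) * l ^ k / Nat.factorial k) * ((k : ℝ) + 1)⁻¹)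
      = Real.exp (-l) * (l ^ (k + 1) / Nat.factorial (k + 1)) := by
    intro k
    rw [Nat.factorial_succ]
    have h1 : (Nat.factorial k : ℝ) ≠ 0 := Nat.cast_ne_zero.mpr (Nat.factorial_ne_zero k)
    have h2 : ((k : ℝ) + 1) ≠ 0 := by positivity
    push_cast
    field_simp
    ring
  rw [← tsum_mul_left]
  calc ∑' k, l * ((Real.exp (-l) * l ^ k / Nat.factorial k) * ((k : ℝ) + 1)⁻¹)
      = ∑' k, Real.exp (-l) * (l ^ (k + 1) / Nat.factorial (k + 1)) := tsum_congr hterm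
    _ = Real.exp (-l) * ∑' k, l ^ (k + 1) / Nat.factorial (k + 1) := tsum_mul_left
    _ = 1 - Real.exp (-l) := by
        have hs : Summable (fun n : ℕ => l ^ n / Nat.factorial n) :=
          Real.summable_pow_div_factorial l
        have hexp : ∑' n : ℕ, l ^ n / (Nat.factorial n : ℝ) = Real.exp l := by
          rw [Real.exp_eq_exp_ℝ, NormedSpace.exp_eq_tsum_div]
        have h0 := Summable.tsum_eq_zero_add hs
        rw [hexp] at h0
        simp only [pow_zero, Nat.factorial_zero, Nat.cast_one] at h0
        have hshift : ∑' n : ℕ, l ^ (n + 1) / (Nat.factorial (n + 1) : ℝ)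
            = Real.exp l - 1 := by linarith
        rw [hshift, mul_sub, mul_one, ← Real.exp_add, neg_add_cancel, Real.exp_zero]
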